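/- arXiv:2603.25888 — 2 statements merged into one kernel-verified Lean document; each statement's English description precedes it below -/
import Mathlib

section
/- Let 0 < T* < 1, γ₃ ∈ (0,1), n ∈ ℕ with n ≥ 1, γ₄ ∈ (0,γ₃), and let f ∈ C^{γ₄}([0,T*]) with f(0) ≠ 0. Let λ, ε₅* ∈ (0,1), ε* ∈ (0, 1−λ^{ε₅*}), and set t₃* = min{T*, (2n)^{−1/γ₃}, [C₆*/(1 + n C₆*)]^{1/γ₄}} with C₆* = Γ(1+x*)|f(0)| ε* / (3 Γ(γ₄) [⟨f⟩^{(γ₄)}_{[0,T*]} + n|f(0)|]). Then for every t ∈ [0, t₃*], |𝒢_f(t)| ≥ (n|f(0)|/Γ(1+γ₃)) · (1 − ε*/3). -/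
open Set MeasureTheory
open intervalIntegral

/-- Hölder seminorm `⟨f⟩^{(α)}_{[0,T]}` of `f` on `[0,T]`. -/
noncomputable def holderSemi (f : ℝ → ℝ) (T α : ℝ) : ℝ :=
  sSup {y : ℝ | ∃ s t : ℝ, 0 ≤ s ∧ s < t ∧ t ≤ T ∧ y = |f t - f s| / (t - s) ^ α}

/-- The minimum value of the Euler Gamma function on `(0, ∞)`, i.e. `Γ(1 + x*)`. -/
noncomputable def GammaMin : ℝ := sInf (Real.Gamma '' Set.Ioi (0 : ℝ))

/-- Two-parametric Mittag-Leffler function `E_{a,b}(z) = Σ_{k} z^k / Γ(a k + b)`. -/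
noncomputable def mittagLeffler (a b z : ℝ) : ℝ :=
  ∑' k : ℕ, z ^ k / Real.Gamma (a * k + b)

/-- `𝒢_f(t) = ∫₀¹ (1-z)^{γ₃-1} n E_{γ₃,γ₃}(-n t^{γ₃} (1-z)^{γ₃}) f(zt) dz`. -/
noncomputable def Gcal (γ₃ : ℝ) (n : ℕ) (f : ℝ → ℝ) (t : ℝ) : ℝ :=
  ∫ z in (0:ℝ)..1, (1 - z) ^ (γ₃ - 1) * (n : ℝ) *
    mittagLeffler γ₃ γ₃ (-((n : ℝ) * t ^ γ₃ * (1 - z) ^ γ₃)) * f (z * t)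



lemma GammaMin_le {s : ℝ} (hs : 0 < s) : GammaMin ≤ Real.Gamma s :=
  csInf_le ⟨0, fun _ ⟨x, hx, hxy⟩ => hxy ▸ (Real.Gamma_pos_of_pos hx).le⟩
    ⟨s, hs, rfl⟩

lemma Gamma_integrand_lb {s x : ℝ} (hs : 0 < s) (hx : x ∈ Set.Icc (2:ℝ) 3) :
    Real.exp (-3) / 3 ≤ Real.exp (-x) * x ^ (s - 1) := by
  obtain ⟨hx2, hx3⟩ := hx
  have hub : Real.exp (-3) ≤ Real.exp (-x) := Real.exp_le_exp.mpr (by linarith)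
  have hxpos : (0:ℝ) < x := by linarith
  have hlb : (1:ℝ)/3 ≤ x ^ (s - 1) := by
    rcases le_or_gt 1 s with h1 | h1
    · calc (1:ℝ)/3 ≤ 1 := by norm_num
        _ = x ^ (0:ℝ) := (Real.rpow_zero x).symm
        _ ≤ x ^ (s-1) := Real.rpow_le_rpow_of_exponent_le (by linarith) (by linarith)
    · calc (1:ℝ)/3 = 3 ^ (-1:ℝ) := by rw [Real.rpow_neg_one]; norm_num
        _ ≤ 3 ^ (s-1) := Real.rpow_le_rpow_of_exponent_le (by norm_num) (by linarith)
        _ ≤ x ^ (s-1) := Real.rpow_le_rpow_of_nonpos hxpos hx3 (by linarith)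
  calc Real.exp (-3) / 3 = Real.exp (-3) * (1/3) := by ring
    _ ≤ Real.exp (-x) * x ^ (s-1) :=
      mul_le_mul hub hlb (by norm_num) (Real.exp_pos _).le

lemma Gamma_lb {s : ℝ} (hs : 0 < s) : Real.exp (-3) / 3 ≤ Real.Gamma s := by
  rw [Real.Gamma_eq_integral hs]
  have hint : IntegrableOn (fun x : ℝ => Real.exp (-x) * x ^ (s - 1)) (Ioi 0) :=
    Real.GammaIntegral_convergent hs
  have h1 : Real.exp (-3) / 3 ≤ ∫ x in Icc (2:ℝ) 3, Real.exp (-x) * x ^ (s-1) := by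
    have hle := MeasureTheory.setIntegral_mono_on
      (g := fun x : ℝ => Real.exp (-x) * x ^ (s - 1))
      (f := fun _ : ℝ => Real.exp (-3) / 3) (s := Icc (2:ℝ) 3)
      ((integrableOn_const_iff).mpr (Or.inr (by rw [Real.volume_Icc]; exact ENNReal.ofReal_lt_top)))
      (hint.mono_set (fun x hx => lt_of_lt_of_le two_pos hx.1))
      measurableSet_Icc (fun x hx => Gamma_integrand_lb hs hx)
    have hconst : ∫ _ in Icc (2:ℝ) 3, Real.exp (-3) / 3 = Real.exp (-3) / 3 := by
      rw [MeasureTheory.setIntegral_const, Real.volume_real_Icc]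
      norm_num
    linarith [hle, hconst ▸ hle]
  refine h1.trans ?_
  apply MeasureTheory.setIntegral_mono_set hint
  · filter_upwards [self_mem_ae_restrict measurableSet_Ioi] with x hx
    exact mul_nonneg (Real.exp_pos _).le (Real.rpow_nonneg (le_of_lt hx) _)
  · exact HasSubset.Subset.eventuallyLE (fun x hx => lt_of_lt_of_le two_pos hx.1)

lemma GammaMin_pos : 0 < GammaMin := by
  have h : Real.exp (-3)/3 ≤ GammaMin :=
    le_csInf ⟨Real.Gamma 1, 1, mem_Ioi.mpr one_pos, rfl⟩
      (fun y ⟨x, hx, hxy⟩ => hxy ▸ Gamma_lb hx)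
  have := Real.exp_pos (-3)
  linarith

lemma one_le_Gamma_of_le_one {a : ℝ} (ha : 0 < a) (ha1 : a ≤ 1) : 1 ≤ Real.Gamma a := by
  rcases eq_or_lt_of_le ha1 with h | h
  · rw [h, Real.Gamma_one]
  · have h2a : (0:ℝ) < 2 - a := by linarith
    have hc := Real.convexOn_Gamma.2 (mem_Ioi.mpr ha) (mem_Ioi.mpr two_pos)
      (show (0:ℝ) ≤ 1/(2-a) by positivity)
      (show (0:ℝ) ≤ (1-a)/(2-a) from div_nonneg (by linarith) (by linarith))
      (by field_simp; ring)
    simp only [smul_eq_mul] at hc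
    have he : (1:ℝ)/(2-a) * a + (1-a)/(2-a) * 2 = 1 := by field_simp; ring
    rw [he, Real.Gamma_one, Real.Gamma_two] at hc
    have h1 : (0:ℝ) < 1/(2-a) := by positivity
    have hsum : (1:ℝ)/(2-a) + (1-a)/(2-a) = 1 := by field_simp; ring
    nlinarith [hc]

lemma Gamma_anti {a b : ℝ} (ha : 0 < a) (hab : a ≤ b) (hb1 : b ≤ 1) :
    Real.Gamma b ≤ Real.Gamma a := by
  rcases eq_or_lt_of_le hab with h | h
  · rw [h]
  · rcases eq_or_lt_of_le hb1 with h1 | h1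
    · rw [h1, Real.Gamma_one]; exact one_le_Gamma_of_le_one ha (by linarith)
    · have h1a : (0:ℝ) < 1 - a := by linarith
      have hc := Real.convexOn_Gamma.2 (mem_Ioi.mpr ha) (mem_Ioi.mpr one_pos)
        (show (0:ℝ) ≤ (1-b)/(1-a) from div_nonneg (by linarith) (by linarith))
        (show (0:ℝ) ≤ (b-a)/(1-a) from div_nonneg (by linarith) (by linarith))
        (by field_simp; ring)
      simp only [smul_eq_mul] at hc
      have he : (1-b)/(1-a) * a + (b-a)/(1-a) * 1 = b := by field_simp; ring
      rw [he, Real.Gamma_one] at hc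
      have hga : 1 ≤ Real.Gamma a := one_le_Gamma_of_le_one ha (by linarith)
      have hsum : (1-b)/(1-a) + (b-a)/(1-a) = 1 := by field_simp; ring
      have hpos : (0:ℝ) ≤ (b-a)/(1-a) := div_nonneg (by linarith) (by linarith)
      nlinarith [hc]

lemma ML_term_bound {γ : ℝ} (hγ : 0 < γ) (w : ℝ) (k : ℕ) :
    |(-w) ^ k / Real.Gamma (γ * k + γ)| ≤ |w| ^ k / GammaMin := by
  have hpos : 0 < γ * k + γ := by positivity
  rw [abs_div, abs_pow, abs_neg, abs_of_pos (Real.Gamma_pos_of_pos hpos)]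
  exact div_le_div_of_nonneg_left (by positivity) GammaMin_pos (GammaMin_le hpos)

lemma ML_term_bound' {γ w x : ℝ} (hγ : 0 < γ) (hwx : |w| ≤ x) (k : ℕ) :
    |(-w) ^ k / Real.Gamma (γ * k + γ)| ≤ x ^ k / GammaMin := by
  refine (ML_term_bound hγ w k).trans ?_
  exact (div_le_div_iff_of_pos_right GammaMin_pos).mpr (pow_le_pow_left₀ (abs_nonneg w) hwx k)

lemma ML_summable {γ w x : ℝ} (hγ : 0 < γ) (hwx : |w| ≤ x) (hx : x < 1) :
    Summable (fun k : ℕ => (-w) ^ k / Real.Gamma (γ * k + γ)) := by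
  have hx0 : 0 ≤ x := (abs_nonneg w).trans hwx
  exact Summable.of_norm_bounded
    ((summable_geometric_of_lt_one hx0 hx).div_const _)
    (fun k => ML_term_bound' hγ hwx k)

lemma ML_abs_le {γ w x : ℝ} (hγ : 0 < γ) (hwx : |w| ≤ x) (hx : x < 1) :
    |mittagLeffler γ γ (-w)| ≤ 1 / ((1 - x) * GammaMin) := by
  have hx0 : 0 ≤ x := (abs_nonneg w).trans hwx
  have hs := ML_summable hγ hwx hx
  have hsb : Summable (fun k : ℕ => x ^ k / GammaMin) :=
    (summable_geometric_of_lt_one hx0 hx).div_const _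
  calc |mittagLeffler γ γ (-w)| ≤ ∑' k : ℕ, |(-w) ^ k / Real.Gamma (γ * k + γ)| := by
        have := norm_tsum_le_tsum_norm (f := fun k : ℕ => (-w) ^ k / Real.Gamma (γ * k + γ))
          (by simpa only [Real.norm_eq_abs] using hs.abs)
        simpa only [Real.norm_eq_abs, mittagLeffler] using this
    _ ≤ ∑' k : ℕ, x ^ k / GammaMin :=
        Summable.tsum_le_tsum (fun k => ML_term_bound' hγ hwx k) hs.abs hsb
    _ = 1 / ((1 - x) * GammaMin) := by
        rw [tsum_div_const, tsum_geometric_of_lt_one hx0 hx, one_div, mul_inv,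
          div_eq_mul_inv]

lemma ML_lower {γ w x : ℝ} (hγ : 0 < γ) (hw0 : 0 ≤ w) (hwx : w ≤ x) (hx : x < 1) :
    1 / Real.Gamma γ - w / ((1 - x) * GammaMin) ≤ mittagLeffler γ γ (-w) := by
  have habs : |w| = w := abs_of_nonneg hw0
  have hx0 : 0 ≤ x := hw0.trans hwx
  have hs := ML_summable hγ (γ := γ) (habs.le.trans hwx) hx
  have h0 : mittagLeffler γ γ (-w)
      = 1 / Real.Gamma γ + ∑' k : ℕ, (-w) ^ (k+1) / Real.Gamma (γ * (k+1) + γ) := by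
    unfold mittagLeffler
    rw [Summable.tsum_eq_zero_add hs]
    norm_num
  rw [h0]
  have hterm : ∀ k : ℕ, |(-w) ^ (k+1) / Real.Gamma (γ * (k+1) + γ)|
      ≤ w * x ^ k / GammaMin := by
    intro k
    have h1 := ML_term_bound hγ w (k+1)
    rw [habs] at h1
    push_cast at h1
    refine h1.trans ?_
    have h2 : w ^ (k+1) ≤ w * x ^ k := by
      rw [pow_succ, mul_comm]
      exact mul_le_mul_of_nonneg_left (pow_le_pow_left₀ hw0 hwx k) hw0
    exact (div_le_div_iff_of_pos_right GammaMin_pos).mpr h2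
  have hsb : Summable (fun k : ℕ => w * x ^ k / GammaMin) := by
    simpa [mul_div_assoc] using
      (((summable_geometric_of_lt_one hx0 hx).div_const GammaMin).mul_left w)
  have hsabs : Summable (fun k : ℕ => |(-w) ^ (k+1) / Real.Gamma (γ * (k+1) + γ)|) :=
    Summable.of_nonneg_of_le (fun k => abs_nonneg _) hterm hsb
  have hrest : |∑' k : ℕ, (-w) ^ (k+1) / Real.Gamma (γ * (k+1) + γ)|
      ≤ w / ((1 - x) * GammaMin) := by
    calc |∑' k : ℕ, (-w) ^ (k+1) / Real.Gamma (γ * (k+1) + γ)|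
        ≤ ∑' k : ℕ, |(-w) ^ (k+1) / Real.Gamma (γ * (k+1) + γ)| := by
          have := norm_tsum_le_tsum_norm
            (f := fun k : ℕ => (-w) ^ (k+1) / Real.Gamma (γ * (k+1) + γ))
            (by simpa only [Real.norm_eq_abs] using hsabs)
          simpa only [Real.norm_eq_abs] using this
      _ ≤ ∑' k : ℕ, w * x ^ k / GammaMin := Summable.tsum_le_tsum hterm hsabs hsb
      _ = w / ((1 - x) * GammaMin) := by
          simp_rw [mul_div_assoc]
          rw [tsum_mul_left, tsum_div_const, tsum_geometric_of_lt_one hx0 hx,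
            div_eq_mul_inv, div_eq_mul_inv, mul_inv]
  have := neg_abs_le (∑' k : ℕ, (-w) ^ (k+1) / Real.Gamma (γ * (k+1) + γ))
  linarith [neg_le_neg hrest]

lemma ii_one_sub_rpow {p : ℝ} (hp : -1 < p) :
    IntervalIntegrable (fun z : ℝ => (1 - z) ^ p) volume 0 1 := by
  have h := (intervalIntegrable_rpow' (a := 0) (b := 1) hp).comp_sub_left 1
  norm_num at h
  exact h.symm

lemma integral_one_sub_rpow {p : ℝ} (hp : -1 < p) :
    ∫ z in (0:ℝ)..1, (1 - z) ^ p = 1 / (p + 1) := by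
  rw [intervalIntegral.integral_comp_sub_left (fun x : ℝ => x ^ p) 1]
  norm_num
  rw [integral_rpow (Or.inl hp), Real.zero_rpow (by linarith), Real.one_rpow]
  norm_num

lemma ML_cont {γ c : ℝ} (hγ : 0 < γ) (hc0 : 0 ≤ c) (hc1 : c < 1) :
    ContinuousOn (fun z : ℝ => mittagLeffler γ γ (-(c * (1 - z) ^ γ))) (Icc (0:ℝ) 1) := by
  set u : ℝ → ℝ := fun z => min 1 (max (1 - z) 0) with hu
  have hucont : Continuous u := by fun_prop
  have hu01 : ∀ z, 0 ≤ u z ∧ u z ≤ 1 := fun z => ⟨le_min zero_le_one (le_max_right _ _), min_le_left _ _⟩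
  have hFc : Continuous (fun z : ℝ => ∑' k : ℕ, (-(c * (u z) ^ γ)) ^ k / Real.Gamma (γ * k + γ)) := by
    apply continuous_tsum (u := fun k : ℕ => c ^ k / GammaMin)
    · intro k
      have : Continuous (fun z : ℝ => (u z) ^ γ) :=
        hucont.rpow_const (fun z => Or.inr hγ.le)
      fun_prop
    · exact (summable_geometric_of_lt_one hc0 hc1).div_const _
    · intro k z
      have hpos : 0 < γ * k + γ := by positivity
      have huγ : 0 ≤ (u z) ^ γ := Real.rpow_nonneg (hu01 z).1 _
      have huγ1 : (u z) ^ γ ≤ 1 := Real.rpow_le_one (hu01 z).1 (hu01 z).2 hγ.le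
      rw [Real.norm_eq_abs, abs_div, abs_pow, abs_neg,
        abs_of_pos (Real.Gamma_pos_of_pos hpos)]
      have h1 : |c * (u z) ^ γ| ≤ c := by
        rw [abs_of_nonneg (by positivity)]
        nlinarith
      exact div_le_div₀ (by positivity) (pow_le_pow_left₀ (abs_nonneg _) h1 k)
        GammaMin_pos (GammaMin_le hpos)
  apply hFc.continuousOn.congr
  intro z hz
  have h1z : u z = 1 - z := by
    rw [hu]
    simp only
    rw [max_eq_left (by linarith [hz.2]), min_eq_right (by linarith [hz.1])]
  simp only [h1z, mittagLeffler]

set_option maxHeartbeats 1000000 in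
lemma key (Ts γ₃ γ₄ : ℝ) (n : ℕ) (f : ℝ → ℝ)
    (hTs : 0 < Ts ∧ Ts < 1) (hγ₃ : γ₃ ∈ Set.Ioo (0:ℝ) 1) (hn : 1 ≤ n)
    (hγ₄ : γ₄ ∈ Set.Ioo (0:ℝ) γ₃)
    (hfc : ContinuousOn f (Set.Icc 0 Ts))
    (hfh : ∀ s t : ℝ, 0 ≤ s → s ≤ t → t ≤ Ts →
      |f t - f s| ≤ holderSemi f Ts γ₄ * (t - s) ^ γ₄)
    (hf0 : 0 < f 0) (εs : ℝ) (hεs0 : 0 < εs) (hεs1 : εs < 1)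
    (t : ℝ) (ht0 : 0 ≤ t) (htT : t ≤ Ts)
    (htC : t ^ γ₄ ≤ GammaMin * f 0 * εs /
        (3 * Real.Gamma γ₄ * (holderSemi f Ts γ₄ + n * f 0)) /
        (1 + n * (GammaMin * f 0 * εs /
        (3 * Real.Gamma γ₄ * (holderSemi f Ts γ₄ + n * f 0))))) :
    (n : ℝ) * f 0 / Real.Gamma (1 + γ₃) * (1 - εs / 3) ≤ Gcal γ₃ n f t := by
  obtain ⟨hγ₃0, hγ₃1⟩ := hγ₃
  obtain ⟨hγ₄0, hγ₄3⟩ := hγ₄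
  set H := holderSemi f Ts γ₄ with hH
  set G := GammaMin with hG
  have hGpos : 0 < G := GammaMin_pos
  have hΓ₃pos : 0 < Real.Gamma γ₃ := Real.Gamma_pos_of_pos hγ₃0
  have hΓ₄pos : 0 < Real.Gamma γ₄ := Real.Gamma_pos_of_pos hγ₄0
  have hΓ₄₃ : Real.Gamma γ₃ ≤ Real.Gamma γ₄ := Gamma_anti hγ₄0 hγ₄3.le hγ₃1.le
  have hnpos : (0:ℝ) < n := by exact_mod_cast Nat.lt_of_lt_of_le Nat.zero_lt_one hn
  -- H ≥ 0
  have hH0 : 0 ≤ H := by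
    have h := hfh 0 Ts le_rfl hTs.1.le le_rfl
    have hTp : 0 < (Ts - 0) ^ γ₄ := Real.rpow_pos_of_pos (by linarith [hTs.1]) _
    nlinarith [abs_nonneg (f Ts - f 0)]
  set C := G * f 0 * εs / (3 * Real.Gamma γ₄ * (H + n * f 0)) with hC
  have hHn : 0 < H + n * f 0 := by positivity
  have hCpos : 0 < C := by positivity
  have h1nC : (0:ℝ) < 1 + n * C := by positivity
  have ht1 : t ≤ 1 := htT.trans hTs.2.le
  have htγ : t ^ γ₃ ≤ t ^ γ₄ := by
    rcases eq_or_lt_of_le ht0 with h | h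
    · rw [← h, Real.zero_rpow (ne_of_gt hγ₃0), Real.zero_rpow (ne_of_gt hγ₄0)]
    · exact Real.rpow_le_rpow_of_exponent_ge h ht1 hγ₄3.le
  set τ := t ^ γ₄ with hτdef
  have hτ0 : 0 ≤ τ := Real.rpow_nonneg ht0 _
  set x := (n:ℝ) * t ^ γ₃ with hx
  have hx0 : 0 ≤ x := by positivity
  have hxnτ : x ≤ n * τ := by
    apply mul_le_mul_of_nonneg_left htγ hnpos.le
  have hτC : τ ≤ C / (1 + n * C) := htC
  have hτ1nC : τ * (1 + n * C) ≤ C := (le_div_iff₀ h1nC).mp hτC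
  have hxlt : x ≤ n * C / (1 + n * C) := by
    calc x ≤ n * τ := hxnτ
      _ ≤ n * (C / (1 + n*C)) := by gcongr
      _ = n * C / (1 + n*C) := by ring
  have hx1 : x < 1 := by
    apply lt_of_le_of_lt hxlt
    rw [div_lt_one h1nC]
    linarith
  have h1x : 0 < 1 - x := by linarith
  have h1xb : 1 / (1 + n * C) ≤ 1 - x := by
    rw [div_le_iff₀ h1nC]
    have h2 : x * (1 + n * C) ≤ n * C := (le_div_iff₀ h1nC).mp hxlt
    nlinarith
  -- constants
  set A := f 0 / Real.Gamma γ₃ - H * τ / ((1 - x) * G) with hA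
  set B := x * f 0 / ((1 - x) * G) with hB
  have hB0 : 0 ≤ B := by positivity
  -- integrands
  set F := fun z : ℝ => (1 - z) ^ (γ₃ - 1) * (n : ℝ) *
      mittagLeffler γ₃ γ₃ (-((n : ℝ) * t ^ γ₃ * (1 - z) ^ γ₃)) * f (z * t) with hF
  set L := fun z : ℝ => (n:ℝ) * A * (1 - z) ^ (γ₃ - 1) - (n:ℝ) * B * (1 - z) ^ (2*γ₃ - 1)
    with hL
  -- integrability of F
  have hb0 : IntervalIntegrable (fun z : ℝ => (1 - z) ^ (γ₃ - 1)) volume 0 1 :=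
    ii_one_sub_rpow (by linarith)
  have huIcc : (Set.uIcc (0:ℝ) 1) = Icc 0 1 := uIcc_of_le zero_le_one
  have hecont : ContinuousOn
      (fun z : ℝ => mittagLeffler γ₃ γ₃ (-((n : ℝ) * t ^ γ₃ * (1 - z) ^ γ₃)))
      (Set.uIcc (0:ℝ) 1) := by
    rw [huIcc]
    exact ML_cont hγ₃0 (by positivity) (lt_of_le_of_lt (le_trans hxnτ (by
      calc (n:ℝ) * τ ≤ n * (C / (1+n*C)) := by gcongr
        _ = n * C / (1+n*C) := by ring)) (by rw [div_lt_one h1nC]; linarith))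
  have hfcont : ContinuousOn (fun z : ℝ => f (z * t)) (Set.uIcc (0:ℝ) 1) := by
    rw [huIcc]
    apply hfc.comp (Continuous.continuousOn (by fun_prop))
    intro z hz
    constructor
    · exact mul_nonneg hz.1 ht0
    · calc z * t ≤ 1 * t := by gcongr; exact hz.2
        _ = t := one_mul t
        _ ≤ Ts := htT
  have hFint : IntervalIntegrable F volume 0 1 := by
    apply IntervalIntegrable.mul_continuousOn _ hfcont
    apply IntervalIntegrable.mul_continuousOn _ hecont
    exact hb0.mul_continuousOn continuousOn_const
  have hb2 : IntervalIntegrable (fun z : ℝ => (1 - z) ^ (2*γ₃ - 1)) volume 0 1 :=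
    ii_one_sub_rpow (by linarith)
  have hLint : IntervalIntegrable L volume 0 1 :=
    ((hb0.const_mul _).sub (hb2.const_mul _))
  -- pointwise bound
  have hpt : ∀ z ∈ Icc (0:ℝ) 1, L z ≤ F z := by
    intro z hz
    rcases eq_or_lt_of_le hz.2 with h1 | h1
    · -- z = 1
      rw [h1]
      simp only [hL, hF]
      rw [sub_self]
      rw [Real.zero_rpow (by linarith : γ₃ - 1 ≠ 0)]
      have h2 : (0:ℝ) ^ (2*γ₃ - 1) ≥ 0 := Real.rpow_nonneg le_rfl _
      nlinarith [mul_nonneg (mul_nonneg (le_of_lt hnpos) hB0) h2]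
    · have h1z : 0 < 1 - z := by linarith
      have hbase : 0 ≤ (1 - z) ^ (γ₃ - 1) := Real.rpow_nonneg h1z.le _
      set w := (n:ℝ) * t ^ γ₃ * (1 - z) ^ γ₃ with hw
      have h1zle : (1 - z) ^ γ₃ ≤ 1 := Real.rpow_le_one h1z.le (by linarith [hz.1]) hγ₃0.le
      have hw0 : 0 ≤ w := by positivity
      have hwx : w ≤ x := by
        calc w = x * (1 - z) ^ γ₃ := by rw [hx]
          _ ≤ x * 1 := by gcongr
          _ = x := mul_one x
      have heL := ML_lower hγ₃0 hw0 hwx hx1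
      have heU := ML_abs_le hγ₃0 (by rwa [abs_of_nonneg hw0]) hx1
      set e := mittagLeffler γ₃ γ₃ (-w) with he
      -- f bound
      have hzt0 : 0 ≤ z * t := mul_nonneg hz.1 ht0
      have hztT : z * t ≤ Ts := by
        calc z * t ≤ 1 * t := mul_le_mul_of_nonneg_right hz.2 ht0
          _ = t := one_mul t
          _ ≤ Ts := htT
      have hfb : |f (z * t) - f 0| ≤ H * τ := by
        have h := hfh 0 (z*t) le_rfl hzt0 hztT
        rw [sub_zero] at h
        refine h.trans ?_
        have : (z * t) ^ γ₄ ≤ τ := by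
          rw [Real.mul_rpow hz.1 ht0]
          calc z ^ γ₄ * t ^ γ₄ ≤ 1 * t ^ γ₄ := by
                gcongr
                exact Real.rpow_le_one hz.1 hz.2 hγ₄0.le
            _ = τ := by rw [one_mul]
        gcongr
      -- combine: e * f(zt) ≥ A' where
      have hcomb : (1 / Real.Gamma γ₃ - w / ((1-x)*G)) * f 0 - H * τ / ((1-x)*G)
          ≤ e * f (z * t) := by
        have h1 : e * f (z * t) = e * f 0 + e * (f (z * t) - f 0) := by ring
        have h2 : (1 / Real.Gamma γ₃ - w / ((1-x)*G)) * f 0 ≤ e * f 0 :=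
          mul_le_mul_of_nonneg_right heL hf0.le
        have h3 : -(H * τ / ((1-x)*G)) ≤ e * (f (z * t) - f 0) := by
          have habs : |e * (f (z * t) - f 0)| ≤ H * τ / ((1-x)*G) := by
            rw [abs_mul]
            calc |e| * |f (z * t) - f 0| ≤ (1/((1-x)*G)) * (H * τ) := by
                  apply mul_le_mul heU hfb (abs_nonneg _) (by positivity)
              _ = H * τ / ((1-x)*G) := by ring
          linarith [neg_abs_le (e * (f (z * t) - f 0))]
        linarith
      -- multiply by the nonneg prefactor
      have hpre : 0 ≤ (1 - z) ^ (γ₃ - 1) * (n:ℝ) := by positivity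
      have hmul := mul_le_mul_of_nonneg_left hcomb hpre
      -- identify L z with LHS
      have hLz : L z = (1 - z) ^ (γ₃ - 1) * (n:ℝ) *
          ((1 / Real.Gamma γ₃ - w / ((1-x)*G)) * f 0 - H * τ / ((1-x)*G)) := by
        rw [hL]
        simp only
        have hsplit : (1 - z) ^ (2*γ₃ - 1) = (1 - z) ^ (γ₃ - 1) * (1 - z) ^ γ₃ := by
          rw [← Real.rpow_add h1z]
          ring_nf
        rw [hsplit, hA, hB, hw, hx]
        field_simp
        ring
      rw [hLz, hF]
      calc (1 - z) ^ (γ₃ - 1) * (n:ℝ) *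
          ((1 / Real.Gamma γ₃ - w / ((1-x)*G)) * f 0 - H * τ / ((1-x)*G))
          ≤ (1 - z) ^ (γ₃ - 1) * (n:ℝ) * (e * f (z * t)) := hmul
        _ = (1 - z) ^ (γ₃ - 1) * (n:ℝ) * e * f (z * t) := by ring
  -- integral comparison
  have hint : ∫ z in (0:ℝ)..1, L z ≤ Gcal γ₃ n f t := by
    have := intervalIntegral.integral_mono_on zero_le_one hLint hFint hpt
    simpa [Gcal, hF] using this
  -- compute ∫ L
  have hLval : ∫ z in (0:ℝ)..1, L z
      = (n:ℝ) * A * (1/γ₃) - (n:ℝ) * B * (1/(2*γ₃)) := by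
    rw [hL]
    rw [intervalIntegral.integral_sub ((hb0.const_mul _)) ((hb2.const_mul _))]
    rw [intervalIntegral.integral_const_mul, intervalIntegral.integral_const_mul]
    rw [integral_one_sub_rpow (by linarith : (-1:ℝ) < γ₃ - 1),
      integral_one_sub_rpow (by linarith : (-1:ℝ) < 2*γ₃ - 1)]
    norm_num
  -- final arithmetic
  have hmain : (H * τ + x * f 0 / 2) / ((1-x)*G) ≤ f 0 * εs / (3 * Real.Gamma γ₃) := by
    calc (H * τ + x * f 0 / 2) / ((1-x)*G)
        ≤ (τ * (H + n * f 0)) / ((1-x)*G) := by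
          gcongr
          nlinarith
      _ ≤ (τ * (H + n * f 0)) / ((1/(1+n*C))*G) :=
          div_le_div_of_nonneg_left (by positivity) (by positivity)
            (mul_le_mul_of_nonneg_right h1xb hGpos.le)
      _ = τ * (1+n*C) * (H + n * f 0) / G := by
          field_simp
      _ ≤ C * (H + n * f 0) / G :=
          (div_le_div_iff_of_pos_right hGpos).mpr (by nlinarith [hτ1nC, hHn])
      _ = f 0 * εs / (3 * Real.Gamma γ₄) := by
          rw [hC]
          field_simp
      _ ≤ f 0 * εs / (3 * Real.Gamma γ₃) :=
          div_le_div_of_nonneg_left (by positivity) (by positivity) (by nlinarith [hΓ₄₃])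
  have hΓadd : Real.Gamma (1 + γ₃) = γ₃ * Real.Gamma γ₃ := by
    rw [add_comm, Real.Gamma_add_one (ne_of_gt hγ₃0)]
  refine le_trans ?_ hint
  rw [hLval, hΓadd]
  have hexp : (n:ℝ) * A * (1/γ₃) - (n:ℝ) * B * (1/(2*γ₃))
      = (n:ℝ) * f 0 / (γ₃ * Real.Gamma γ₃)
        - ((n:ℝ)/γ₃) * ((H * τ + x * f 0 / 2) / ((1-x)*G)) := by
    rw [hA, hB]
    field_simp
    ring
  rw [hexp]
  have hrw : (n:ℝ) * f 0 / (γ₃ * Real.Gamma γ₃) * (1 - εs/3)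
      = (n:ℝ) * f 0 / (γ₃ * Real.Gamma γ₃)
        - ((n:ℝ)/γ₃) * (f 0 * εs / (3 * Real.Gamma γ₃)) := by
    field_simp
  rw [hrw]
  have := mul_le_mul_of_nonneg_left hmain (by positivity : (0:ℝ) ≤ (n:ℝ)/γ₃)
  linarith


theorem stmt_9 (Ts γ₃ γ₄ : ℝ) (n : ℕ) (f : ℝ → ℝ)
    (hTs : 0 < Ts ∧ Ts < 1) (hγ₃ : γ₃ ∈ Set.Ioo (0:ℝ) 1)
    (hn : 1 ≤ n) (hγ₄ : γ₄ ∈ Set.Ioo (0:ℝ) γ₃)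
    (hfc : ContinuousOn f (Set.Icc 0 Ts))
    (hfh : ∀ s t : ℝ, 0 ≤ s → s ≤ t → t ≤ Ts →
      |f t - f s| ≤ holderSemi f Ts γ₄ * (t - s) ^ γ₄)
    (hf0 : f 0 ≠ 0)
    (lam ε₅ εs : ℝ) (hlam : lam ∈ Set.Ioo (0:ℝ) 1) (hε₅ : ε₅ ∈ Set.Ioo (0:ℝ) 1)
    (hεs : εs ∈ Set.Ioo (0:ℝ) (1 - lam ^ ε₅)) :
    ∀ t ∈ Set.Icc (0:ℝ)
      (min Ts (min ((2 * (n : ℝ)) ^ (-(1 / γ₃)))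
        ((GammaMin * |f 0| * εs /
              (3 * Real.Gamma γ₄ * (holderSemi f Ts γ₄ + (n : ℝ) * |f 0|)) /
            (1 + (n : ℝ) * (GammaMin * |f 0| * εs /
              (3 * Real.Gamma γ₄ * (holderSemi f Ts γ₄ + (n : ℝ) * |f 0|))))) ^
          (1 / γ₄)))),
      (n : ℝ) * |f 0| / Real.Gamma (1 + γ₃) * (1 - εs / 3) ≤ |Gcal γ₃ n f t| := by
  intro t ht
  obtain ⟨ht0, htup⟩ := ht
  have htTs : t ≤ Ts := htup.trans (min_le_left _ _)
  have hεs0 : 0 < εs := hεs.1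
  have hεs1 : εs < 1 := by
    have := Real.rpow_pos_of_pos hlam.1 ε₅
    have := hεs.2
    linarith
  have hγ₄0 : 0 < γ₄ := hγ₄.1
  have hH0 : 0 ≤ holderSemi f Ts γ₄ := by
    have h := hfh 0 Ts le_rfl hTs.1.le le_rfl
    have hTp : 0 < (Ts - 0) ^ γ₄ := Real.rpow_pos_of_pos (by linarith [hTs.1]) _
    nlinarith [abs_nonneg (f Ts - f 0)]
  have hf0abs : 0 < |f 0| := abs_pos.mpr hf0
  have hnpos : (0:ℝ) < n := by exact_mod_cast Nat.lt_of_lt_of_le Nat.zero_lt_one hn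
  set C := GammaMin * |f 0| * εs /
      (3 * Real.Gamma γ₄ * (holderSemi f Ts γ₄ + (n : ℝ) * |f 0|)) with hCdef
  have hΓ₄pos : 0 < Real.Gamma γ₄ := Real.Gamma_pos_of_pos hγ₄0
  have hGpos := GammaMin_pos
  have hCpos : 0 < C := by positivity
  have hq0 : 0 ≤ C / (1 + n * C) := by positivity
  have htM3 : t ≤ (C / (1 + n * C)) ^ (1/γ₄) :=
    htup.trans ((min_le_right _ _).trans (min_le_right _ _))
  have htpow : t ^ γ₄ ≤ C / (1 + n * C) := by
    have h := Real.rpow_le_rpow ht0 htM3 hγ₄0.le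
    rwa [← Real.rpow_mul hq0, one_div, inv_mul_cancel₀ (ne_of_gt hγ₄0),
      Real.rpow_one] at h
  rcases lt_or_gt_of_ne hf0 with hneg | hpos
  · -- f 0 < 0 : apply key to -f
    set g := fun x : ℝ => -f x with hg
    have hg0 : 0 < g 0 := by simp [hg]; linarith
    have habsg : |f 0| = g 0 := by simp [hg, abs_of_neg hneg]
    have habs2 : ∀ a b : ℝ, |g a - g b| = |f a - f b| := by
      intro a b
      rw [hg]
      simp only
      rw [← abs_neg]
      ring_nf
    have hHeq : holderSemi g Ts γ₄ = holderSemi f Ts γ₄ := by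
      unfold holderSemi
      congr 1
      ext y
      simp only [Set.mem_setOf_eq]
      constructor
      · rintro ⟨s, u, h1, h2, h3, rfl⟩
        exact ⟨s, u, h1, h2, h3, by rw [habs2]⟩
      · rintro ⟨s, u, h1, h2, h3, rfl⟩
        exact ⟨s, u, h1, h2, h3, by rw [habs2]⟩
    have hgc : ContinuousOn g (Set.Icc 0 Ts) := hfc.neg
    have hgh : ∀ s u : ℝ, 0 ≤ s → s ≤ u → u ≤ Ts →
        |g u - g s| ≤ holderSemi g Ts γ₄ * (u - s) ^ γ₄ := by
      intro s u h1 h2 h3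
      rw [habs2, hHeq]
      exact hfh s u h1 h2 h3
    have hGcalg : Gcal γ₃ n g t = -Gcal γ₃ n f t := by
      unfold Gcal
      rw [← intervalIntegral.integral_neg]
      congr 1
      funext z
      simp [hg]
    have hb := key Ts γ₃ γ₄ n g hTs hγ₃ hn hγ₄ hgc hgh hg0 εs hεs0 hεs1 t ht0 htTs
      (by rw [hHeq, ← habsg]; exact htpow)
    rw [hGcalg, ← habsg] at hb
    calc (n : ℝ) * |f 0| / Real.Gamma (1 + γ₃) * (1 - εs / 3)
        ≤ -Gcal γ₃ n f t := hb
      _ ≤ |Gcal γ₃ n f t| := neg_le_abs _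
  · -- f 0 > 0
    have habs : |f 0| = f 0 := abs_of_pos hpos
    have hb := key Ts γ₃ γ₄ n f hTs hγ₃ hn hγ₄ hfc hfh hpos εs hεs0 hεs1 t ht0 htTs
      (by rw [← habs]; exact htpow)
    rw [← habs] at hb
    exact hb.trans (le_abs_self _)
end

section
/- Let γ₃ ∈ (0,1), λ ∈ (0,1), n ∈ ℕ with n ≥ 1, and let t ≥ 0 satisfy n t^{γ₃} < 1. Then |E_{γ₃,1+γ₃}(−n λ^{γ₃} t^{γ₃}) − E_{γ₃,1+γ₃}(−n t^{γ₃})| ≤ 2 n t^{γ₃} / (Γ(1+x*) (1 − n t^{γ₃})). -/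
open Set

lemma gamma_lower_of_one_le {x : ℝ} (hx : 1 ≤ x) : Real.exp (-1) ≤ Real.Gamma x := by
  rw [Real.Gamma_eq_integral (by linarith)]
  have h1 : Real.exp (-1) = ∫ u in Ioi (1:ℝ), Real.exp (-u) := (integral_exp_neg_Ioi 1).symm
  rw [h1]
  have hint : MeasureTheory.IntegrableOn (fun u : ℝ => Real.exp (-u) * u ^ (x - 1)) (Ioi 1) :=
    (Real.GammaIntegral_convergent (by linarith)).mono_set (Ioi_subset_Ioi zero_le_one)
  have step1 : (∫ u in Ioi (1:ℝ), Real.exp (-u)) ≤ ∫ u in Ioi (1:ℝ), Real.exp (-u) * u ^ (x - 1) := by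
    apply MeasureTheory.setIntegral_mono_on (by simpa using exp_neg_integrableOn_Ioi 1 zero_lt_one) hint
      measurableSet_Ioi
    intro u hu
    have hu1 : (1:ℝ) ≤ u := le_of_lt hu
    nth_rewrite 1 [← mul_one (Real.exp (-u))]
    gcongr
    exact Real.one_le_rpow hu1 (by linarith)
  have step2 : (∫ u in Ioi (1:ℝ), Real.exp (-u) * u ^ (x - 1)) ≤
      ∫ u in Ioi (0:ℝ), Real.exp (-u) * u ^ (x - 1) := by
    apply MeasureTheory.setIntegral_mono_set (Real.GammaIntegral_convergent (by linarith))
    · filter_upwards [MeasureTheory.ae_restrict_mem measurableSet_Ioi] with u hu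
      have : (0:ℝ) ≤ u := hu.le
      positivity
    · exact HasSubset.Subset.eventuallyLE (Ioi_subset_Ioi zero_le_one)
  linarith

lemma gamma_lower {x : ℝ} (hx : 0 < x) : Real.exp (-1) ≤ Real.Gamma x := by
  rcases le_or_gt 1 x with h | h
  · exact gamma_lower_of_one_le h
  · have h1 : Real.Gamma (x + 1) = x * Real.Gamma x := Real.Gamma_add_one hx.ne'
    have h2 : Real.exp (-1) ≤ Real.Gamma (x + 1) := gamma_lower_of_one_le (by linarith)
    nlinarith [Real.Gamma_pos_of_pos hx]

lemma GammaMin_pos_s13 : Real.exp (-1) ≤ GammaMin := by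
  rw [GammaMin]
  apply le_csInf (by exact ⟨Real.Gamma 1, 1, by simp, rfl⟩)
  rintro y ⟨x, hx, rfl⟩
  exact gamma_lower hx

lemma GammaMin_le_s13 {x : ℝ} (hx : 0 < x) : GammaMin ≤ Real.Gamma x := by
  rw [GammaMin]
  apply csInf_le
  · exact ⟨Real.exp (-1), by rintro y ⟨z, hz, rfl⟩; exact gamma_lower hz⟩
  · exact ⟨x, hx, rfl⟩

set_option maxHeartbeats 1000000 in
theorem stmt_13 (γ₃ lam : ℝ) (n : ℕ)
    (hγ₃ : γ₃ ∈ Set.Ioo (0:ℝ) 1) (hlam : lam ∈ Set.Ioo (0:ℝ) 1) (hn : 1 ≤ n)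
    (t : ℝ) (ht : 0 ≤ t) (hnt : (n : ℝ) * t ^ γ₃ < 1) :
    |mittagLeffler γ₃ (1 + γ₃) (-((n : ℝ) * lam ^ γ₃ * t ^ γ₃)) -
        mittagLeffler γ₃ (1 + γ₃) (-((n : ℝ) * t ^ γ₃))| ≤
      2 * (n : ℝ) * t ^ γ₃ / (GammaMin * (1 - (n : ℝ) * t ^ γ₃)) := by
  obtain ⟨hγ0, hγ1⟩ := hγ₃
  obtain ⟨hl0, hl1⟩ := hlam
  set q : ℝ := (n:ℝ) * t ^ γ₃ with hqdef
  set p : ℝ := (n:ℝ) * lam ^ γ₃ * t ^ γ₃ with hpdef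
  have htg : 0 ≤ t ^ γ₃ := Real.rpow_nonneg ht _
  have hq0 : 0 ≤ q := mul_nonneg (Nat.cast_nonneg n) htg
  have hq1 : q < 1 := hnt
  have hlg1 : lam ^ γ₃ ≤ 1 := Real.rpow_le_one hl0.le hl1.le hγ0.le
  have hlg0 : 0 ≤ lam ^ γ₃ := Real.rpow_nonneg hl0.le _
  have hp0 : 0 ≤ p := mul_nonneg (mul_nonneg (Nat.cast_nonneg n) hlg0) htg
  have hpq : p ≤ q := by
    have h := mul_le_mul_of_nonneg_right
      (mul_le_mul_of_nonneg_left hlg1 (Nat.cast_nonneg n : (0:ℝ) ≤ n)) htg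
    simpa [hpdef, hqdef] using h
  have hGm : Real.exp (-1) ≤ GammaMin := GammaMin_pos_s13
  have hGm0 : 0 < GammaMin := lt_of_lt_of_le (Real.exp_pos _) hGm
  have hGpos : ∀ k:ℕ, 0 < Real.Gamma (γ₃ * k + (1+γ₃)) := fun k =>
    Real.Gamma_pos_of_pos (by positivity)
  have hGge : ∀ k:ℕ, GammaMin ≤ Real.Gamma (γ₃ * k + (1+γ₃)) := fun k =>
    GammaMin_le_s13 (by positivity)
  have hsum : ∀ z:ℝ, |z| ≤ q → Summable (fun k:ℕ => z^k / Real.Gamma (γ₃*k+(1+γ₃))) := by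
    intro z hz
    apply Summable.of_norm_bounded
      ((summable_geometric_of_lt_one hq0 hq1).mul_left GammaMin⁻¹)
    intro k
    rw [Real.norm_eq_abs, abs_div, abs_pow, abs_of_pos (hGpos k), inv_mul_eq_div]
    exact div_le_div₀ (pow_nonneg hq0 k) (pow_le_pow_left₀ (abs_nonneg z) hz k) hGm0 (hGge k)
  have hz1 : |(-p)| ≤ q := by rw [abs_neg, abs_of_nonneg hp0]; exact hpq
  have hz2 : |(-q)| ≤ q := by rw [abs_neg, abs_of_nonneg hq0]
  have hS1 := hsum _ hz1
  have hS2 := hsum _ hz2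
  unfold mittagLeffler
  rw [← Summable.tsum_sub hS1 hS2]
  set f : ℕ → ℝ := fun k =>
    (-p)^k / Real.Gamma (γ₃*k+(1+γ₃)) - (-q)^k / Real.Gamma (γ₃*k+(1+γ₃)) with hf
  have hfs : Summable f := hS1.sub hS2
  have habs : Summable (fun k => |f k|) := hfs.abs
  have hf0 : |f 0| = 0 := by simp [hf]
  have key : ∀ k:ℕ, |f (k+1)| ≤ (2*q/GammaMin) * q^k := by
    intro k
    have hexp : f (k+1) = ((-p)^(k+1) - (-q)^(k+1)) / Real.Gamma (γ₃*(((k+1:ℕ)):ℝ)+(1+γ₃)) := by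
      simp only [hf]; rw [div_sub_div_same]
    rw [hexp, abs_div, abs_of_pos (hGpos (k+1))]
    have hnum : |(-p)^(k+1) - (-q)^(k+1)| ≤ 2 * q^(k+1) := by
      have h1 := norm_sub_le ((-p)^(k+1)) ((-q)^(k+1))
      simp only [Real.norm_eq_abs, abs_pow, abs_neg, abs_of_nonneg hp0,
        abs_of_nonneg hq0] at h1
      have h2 : p^(k+1) ≤ q^(k+1) := pow_le_pow_left₀ hp0 hpq _
      linarith
    have : |(-p)^(k+1) - (-q)^(k+1)| / Real.Gamma (γ₃*(((k+1:ℕ)):ℝ)+(1+γ₃)) ≤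
        (2 * q^(k+1)) / GammaMin :=
      div_le_div₀ (by positivity) hnum hGm0 (hGge (k+1))
    refine this.trans_eq ?_
    rw [pow_succ]
    ring
  have hshift : Summable (fun k => |f (k+1)|) := (summable_nat_add_iff 1).mpr habs
  calc |∑' k, f k| ≤ ∑' k, |f k| := by
        have h := norm_tsum_le_tsum_norm (f := f)
          (by simpa only [Real.norm_eq_abs] using habs)
        simpa only [Real.norm_eq_abs] using h
    _ = |f 0| + ∑' k, |f (k+1)| := Summable.tsum_eq_zero_add habs
    _ = ∑' k, |f (k+1)| := by rw [hf0, zero_add]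
    _ ≤ ∑' k:ℕ, (2*q/GammaMin) * q^k := Summable.tsum_le_tsum key hshift
        (((summable_geometric_of_lt_one hq0 hq1)).mul_left _)
    _ = (2*q/GammaMin) * (1-q)⁻¹ := by
        rw [tsum_mul_left, tsum_geometric_of_lt_one hq0 hq1]
    _ = 2 * (n:ℝ) * t ^ γ₃ / (GammaMin * (1 - q)) := by
        rw [hqdef]
        field_simp
end
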